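/- Let R be a unital associative algebra over ℚ (not necessarily commutative), and let x, y ∈ R be nilpotent elements with x^N = 0 for some integer N > 1 and [x,y]^{(k)} = 0 for some positive integer k. Then e^{-y} e^{x} e^{y} = exp(Σ_{i=0}^{k-1} (1/i!) [x,y]^{(i)}), where the exponential on the right-hand side is well-defined since Σ_{i=0}^{k-1} (1/i!) [x,y]^{(i)} is nilpotent. -/

import Mathlib

/-- Iterated commutator: `iterComm x y 0 = x`, `iterComm x y (k+1) = [iterComm x y k, y]`
where `[a, b] = a * b - b * a`. -/
def iterComm {R : Type*} [Ring R] (x y : R) : ℕ → R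
  | 0 => x
  | k + 1 => iterComm x y k * y - y * iterComm x y k

/-- The exponential of a nilpotent element of a `ℚ`-algebra: the (finite) sum
`∑ i, aⁱ/i!`, truncated at the nilpotency class of `a` (all higher terms vanish,
so the sum is well-defined). -/
noncomputable def nilExp {R : Type*} [Ring R] [Algebra ℚ R] (a : R) : R :=
  ∑ i ∈ Finset.range (nilpotencyClass a), ((i.factorial : ℚ)⁻¹) • a ^ i

namespace ExpAux

variable {R : Type*} [Ring R] [Algebra ℚ R]

/-- Truncated exponential sum. -/
noncomputable def expT (a : R) (n : ℕ) : R :=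
  ∑ i ∈ Finset.range n, ((i.factorial : ℚ)⁻¹) • a ^ i

lemma pow_eq_zero_of_le' {a : R} {m i : ℕ} (ha : a ^ m = 0) (h : m ≤ i) : a ^ i = 0 := by
  have : a ^ i = a ^ m * a ^ (i - m) := by rw [← pow_add]; congr 1; omega
  rw [this, ha, zero_mul]

lemma nilExp_eq_expT {a : R} {m n : ℕ} (ha : a ^ m = 0) (h : m ≤ n) :
    nilExp a = expT a n := by
  have hcls : nilpotencyClass a ≤ m := Nat.sInf_le ha
  have hnil : IsNilpotent a := ⟨m, ha⟩
  unfold nilExp expT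
  refine Finset.sum_subset (Finset.range_subset_range.mpr (hcls.trans h)) ?_
  intro i _ hi
  rw [Finset.mem_range, not_lt] at hi
  rw [pow_eq_zero_of_le' (pow_nilpotencyClass hnil) hi, smul_zero]

lemma iterComm_eq_zero_of_le {x y : R} {k i : ℕ} (hk : iterComm x y k = 0) (h : k ≤ i) :
    iterComm x y i = 0 := by
  induction i, h using Nat.le_induction with
  | base => exact hk
  | succ i hi ih => simp [iterComm, ih]

lemma iterComm_eq_sum (x y : R) (i : ℕ) :
    iterComm x y i =
      ∑ p ∈ Finset.range (i + 1),
        (((-1 : ℚ) ^ p * (i.choose p : ℚ)) • (y ^ p * x * y ^ (i - p))) := by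
  induction i with
  | zero => simp [iterComm]
  | succ i ih =>
    set a : ℕ → R := fun p => ((-1 : ℚ) ^ p * (i.choose p : ℚ)) • (y ^ p * x * y ^ (i + 1 - p))
      with ha
    set b : ℕ → R := fun p => match p with
      | 0 => 0
      | q + 1 => ((-1 : ℚ) ^ q * (i.choose q : ℚ)) • (y ^ (q + 1) * x * y ^ (i + 1 - (q + 1)))
      with hb
    have hA : iterComm x y i * y = ∑ p ∈ Finset.range (i + 2), a p := by
      have h2 := Finset.sum_range_succ a (i + 1)
      rw [h2, ha]
      simp only [Nat.choose_succ_self, Nat.cast_zero, mul_zero, zero_smul, add_zero]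
      rw [ih, Finset.sum_mul]
      refine Finset.sum_congr rfl fun p hp => ?_
      rw [Finset.mem_range] at hp
      rw [smul_mul_assoc, mul_assoc, ← pow_succ]
      congr 3
      omega
    have hB : y * iterComm x y i = ∑ p ∈ Finset.range (i + 2), b p := by
      have h2 := Finset.sum_range_succ' b (i + 1)
      rw [h2, hb]
      simp only [add_zero]
      rw [ih, Finset.mul_sum]
      refine Finset.sum_congr rfl fun p hp => ?_
      rw [Finset.mem_range] at hp
      show y * (((-1 : ℚ) ^ p * (i.choose p : ℚ)) • (y ^ p * x * y ^ (i - p))) = _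
      rw [mul_smul_comm]
      congr 1
      have he : i + 1 - (p + 1) = i - p := by omega
      rw [he]
      simp [pow_succ', mul_assoc]
    show iterComm x y i * y - y * iterComm x y i = _
    rw [hA, hB, ← Finset.sum_sub_distrib]
    refine Finset.sum_congr rfl fun p hp => ?_
    rcases p with _ | q
    · simp [ha, hb]
    · show ((-1 : ℚ) ^ (q + 1) * (i.choose (q + 1) : ℚ)) • (y ^ (q + 1) * x * y ^ (i + 1 - (q + 1)))
          - ((-1 : ℚ) ^ q * (i.choose q : ℚ)) • (y ^ (q + 1) * x * y ^ (i + 1 - (q + 1))) = _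
      rw [← sub_smul]
      congr 1
      rw [Nat.choose_succ_succ i q]
      push_cast
      ring

lemma sum_square_eq_sum_triangle {M : Type*} [AddCommMonoid M] (n : ℕ) (f : ℕ → ℕ → M)
    (hf : ∀ p q, p < n → q < n → n ≤ p + q → f p q = 0) :
    ∑ p ∈ Finset.range n, ∑ q ∈ Finset.range n, f p q =
      ∑ i ∈ Finset.range n, ∑ p ∈ Finset.range (i + 1), f p (i - p) := by
  classical
  rw [← Finset.sum_product' (s := Finset.range n) (t := Finset.range n) (f := fun p q => f p q)]
  rw [Finset.sum_sigma' (Finset.range n) (fun i => Finset.range (i + 1)) (fun i p => f p (i - p))]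
  rw [← Finset.sum_filter_of_ne (p := fun pq : ℕ × ℕ => pq.1 + pq.2 < n) ?hne]
  case hne =>
    intro pq hpq hne
    simp only [Finset.mem_product, Finset.mem_range] at hpq
    by_contra h
    exact hne (hf pq.1 pq.2 hpq.1 hpq.2 (by omega))
  refine Finset.sum_nbij' (fun pq => ⟨pq.1 + pq.2, pq.1⟩) (fun ip => (ip.2, ip.1 - ip.2))
    ?_ ?_ ?_ ?_ ?_
  · intro a ha
    simp only [Finset.mem_filter, Finset.mem_product, Finset.mem_range] at ha
    simp only [Finset.mem_sigma, Finset.mem_range]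
    omega
  · intro b hb
    simp only [Finset.mem_sigma, Finset.mem_range] at hb
    simp only [Finset.mem_filter, Finset.mem_product, Finset.mem_range]
    omega
  · intro a ha
    simp only [Finset.mem_filter, Finset.mem_product, Finset.mem_range] at ha
    simp only [Prod.ext_iff]
    constructor <;> simp <;> omega
  · intro b hb
    simp only [Finset.mem_sigma, Finset.mem_range] at hb
    ext <;> simp <;> omega
  · intro a ha
    simp only [Finset.mem_filter, Finset.mem_product, Finset.mem_range] at ha
    simp

lemma conj_expansion (x y : R) {m n : ℕ} (hy : y ^ m = 0) (hn : 2 * m ≤ n) :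
    expT (-y) n * x * expT y n =
      ∑ i ∈ Finset.range n, ((i.factorial : ℚ)⁻¹) • iterComm x y i := by
  have hneg : expT (-y) n = ∑ p ∈ Finset.range n,
      (((-1 : ℚ) ^ p * (p.factorial : ℚ)⁻¹) • y ^ p) := by
    unfold expT
    refine Finset.sum_congr rfl fun p _ => ?_
    have : (-y) ^ p = ((-1 : ℚ) ^ p) • y ^ p := by
      rw [show -y = (-1 : ℚ) • y by simp, smul_pow]
    rw [this, smul_smul, mul_comm]
  have lhs_eq : expT (-y) n * x * expT y n =
      ∑ p ∈ Finset.range n, ∑ q ∈ Finset.range n,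
        (((-1 : ℚ) ^ p * (p.factorial : ℚ)⁻¹ * (q.factorial : ℚ)⁻¹) •
          (y ^ p * x * y ^ q)) := by
    rw [hneg]
    unfold expT
    rw [Finset.sum_mul, Finset.sum_mul]
    refine Finset.sum_congr rfl fun p _ => ?_
    rw [Finset.mul_sum]
    refine Finset.sum_congr rfl fun q _ => ?_
    rw [smul_mul_assoc, smul_mul_assoc, mul_smul_comm, smul_smul]
  rw [lhs_eq]
  rw [sum_square_eq_sum_triangle n _ ?hvanish]
  case hvanish =>
    intro p q hp hq hpq
    have : y ^ p = 0 ∨ y ^ q = 0 := by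
      rcases le_or_gt m p with h | h
      · exact Or.inl (pow_eq_zero_of_le' hy h)
      · exact Or.inr (pow_eq_zero_of_le' hy (by omega))
    rcases this with h | h <;> simp [h]
  refine Finset.sum_congr rfl fun i _ => ?_
  rw [iterComm_eq_sum, Finset.smul_sum]
  refine Finset.sum_congr rfl fun p hp => ?_
  rw [Finset.mem_range] at hp
  rw [smul_smul]
  congr 1
  have hple : p ≤ i := by omega
  have hfact := Nat.choose_mul_factorial_mul_factorial hple
  have h1 : (p.factorial : ℚ) ≠ 0 := Nat.cast_ne_zero.mpr p.factorial_ne_zero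
  have h2 : ((i - p).factorial : ℚ) ≠ 0 := Nat.cast_ne_zero.mpr (i - p).factorial_ne_zero
  have h3 : (i.factorial : ℚ) ≠ 0 := Nat.cast_ne_zero.mpr i.factorial_ne_zero
  have hfq : (i.choose p : ℚ) * (p.factorial : ℚ) * ((i - p).factorial : ℚ) =
      (i.factorial : ℚ) := by exact_mod_cast congrArg (Nat.cast : ℕ → ℚ) hfact
  field_simp
  linear_combination (-1 : ℚ) * hfq

lemma expT_neg_mul (y : R) {m n : ℕ} (hy : y ^ m = 0) (hn : 2 * m ≤ n) (hn0 : 0 < n) :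
    expT (-y) n * expT y n = 1 := by
  have h := conj_expansion (1 : R) y hy hn
  rw [mul_one] at h
  rw [h, Finset.sum_eq_single 0]
  · simp [iterComm]
  · intro i _ hi
    rw [iterComm_eq_zero_of_le (k := 1) (by simp [iterComm]) (by omega), smul_zero]
  · intro h0
    exact absurd (Finset.mem_range.mpr hn0) h0

end ExpAux

open ExpAux

theorem exp_conj_exp_eq_exp_sum_iterComm {R : Type*} [Ring R] [Algebra ℚ R]
    (x y : R) (hx : IsNilpotent x) (hy : IsNilpotent y)
    (N : ℕ) (hN : 1 < N) (hxN : x ^ N = 0)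
    (k : ℕ) (hkpos : 0 < k) (hk : iterComm x y k = 0) :
    nilExp (-y) * nilExp x * nilExp y =
      nilExp (∑ i ∈ Finset.range k, ((i.factorial : ℚ)⁻¹) • iterComm x y i) := by
  obtain ⟨m, hym⟩ := hy
  set n := 2 * m + k + N with hn
  have hmn : 2 * m ≤ n := by omega
  have hn0 : 0 < n := by omega
  have hNn : N ≤ n := by omega
  have hkn : k ≤ n := by omega
  have hmn' : m ≤ n := by omega
  have hym' : (-y) ^ m = 0 := by rw [neg_pow, hym, mul_zero]
  set u := expT y n with hu
  set v := expT (-y) n with hv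
  have hvu : v * u = 1 := expT_neg_mul y hym hmn hn0
  have huv : u * v = 1 := by
    have := expT_neg_mul (-y) hym' hmn hn0
    rwa [neg_neg] at this
  set s := ∑ i ∈ Finset.range k, ((i.factorial : ℚ)⁻¹) • iterComm x y i with hs
  have hzs : v * x * u = s := by
    rw [hv, hu, conj_expansion x y hym hmn, hs]
    symm
    refine Finset.sum_subset (Finset.range_subset_range.mpr hkn) ?_
    intro i _ hi
    rw [Finset.mem_range, not_lt] at hi
    rw [iterComm_eq_zero_of_le hk hi, smul_zero]
  have hpow : ∀ i : ℕ, (v * x * u) ^ i = v * x ^ i * u := by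
    intro i
    induction i with
    | zero => rw [pow_zero, pow_zero, mul_one]; exact hvu.symm
    | succ i ih =>
      rw [pow_succ, ih]
      have h1 : v * x ^ i * u * (v * x * u) = v * x ^ i * (u * v) * (x * u) := by
        noncomm_ring
      rw [h1, huv, mul_one, pow_succ]
      noncomm_ring
  have hsN : s ^ N = 0 := by
    rw [← hzs, hpow N, hxN, mul_zero, zero_mul]
  have hconj : v * expT x n * u = expT s n := by
    unfold expT
    rw [Finset.mul_sum, Finset.sum_mul]
    refine Finset.sum_congr rfl fun i _ => ?_
    rw [mul_smul_comm, smul_mul_assoc, ← hpow i, hzs]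
  rw [nilExp_eq_expT hym' hmn', nilExp_eq_expT hxN hNn, nilExp_eq_expT hym hmn',
    nilExp_eq_expT hsN hNn]
  exact hconj
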